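/- Let G be a nontrivial additive subgroup of ℂ, let λ ∈ ℂ with λ ∉ {0, 1, −2}, and let j ∈ G with j ≠ 0. If φ is a 1/2-derivation of the deformed generalized Heisenberg–Virasoro algebra g(G,λ) of degree j, i.e. φ(g(G,λ)_k) ⊆ g(G,λ)_{k+j} for all k ∈ G, then φ = 0. -/

import Mathlib

open scoped Classical

/-- Index set for the basis of the deformed generalized Heisenberg–Virasoro
algebra `g(G, λ)` (for `λ ∉ {0, 1, -2}`): vectors `L a`, `I a` for `a ∈ G`
together with the central element `C_L`. -/
inductive DGHVIdx (G : AddSubgroup ℂ) : Type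
  | L : G → DGHVIdx G
  | I : G → DGHVIdx G
  | CL : DGHVIdx G

/-- Degree of a basis element with respect to the `G`-grading. -/
noncomputable def DGHVIdx.deg {G : AddSubgroup ℂ} : DGHVIdx G → G
  | .L a => a
  | .I a => a
  | .CL => 0

set_option maxHeartbeats 4000000

/-- a homogeneous `1/2`-derivation of nonzero degree `j` of
`g(G, λ)` (with `λ ∉ {0, 1, -2}`) vanishes. -/
theorem halfDerivation_of_nonzero_degree_eq_zero
    (G : AddSubgroup ℂ) [Nontrivial G]
    (lam : ℂ) (hlam0 : lam ≠ 0) (hlam1 : lam ≠ 1) (hlam2 : lam ≠ -2)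
    (Lg : Type*) [LieRing Lg] [LieAlgebra ℂ Lg]
    (bas : Module.Basis (DGHVIdx G) ℂ Lg)
    (hLL : ∀ a b : G, ⁅bas (DGHVIdx.L a), bas (DGHVIdx.L b)⁆ =
      ((b : ℂ) - (a : ℂ)) • bas (DGHVIdx.L (a + b)) +
        (if a + b = 0 then ((a : ℂ) ^ 3 - (a : ℂ)) / 12 else 0) • bas DGHVIdx.CL)
    (hLI : ∀ a b : G, ⁅bas (DGHVIdx.L a), bas (DGHVIdx.I b)⁆ =
      ((b : ℂ) - lam * (a : ℂ)) • bas (DGHVIdx.I (a + b)))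
    (hII : ∀ a b : G, ⁅bas (DGHVIdx.I a), bas (DGHVIdx.I b)⁆ = 0)
    (hCL : ∀ x : Lg, ⁅bas DGHVIdx.CL, x⁆ = 0)
    (φ : Lg →ₗ[ℂ] Lg)
    (hφ : ∀ x y : Lg, φ ⁅x, y⁆ = (1 / 2 : ℂ) • (⁅φ x, y⁆ + ⁅x, φ y⁆))
    (j : G) (hj : j ≠ 0)
    (hdeg : ∀ k : G, ∀ x ∈ Submodule.span ℂ (⇑bas '' {i | DGHVIdx.deg i = k}),
      φ x ∈ Submodule.span ℂ (⇑bas '' {i | DGHVIdx.deg i = k + j})) :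
    φ = 0 := by
  classical
  have hjc : (j : ℂ) ≠ 0 := fun h => hj (by simpa using h)
  -- support lemma
  have hsupp : ∀ (i i' : DGHVIdx G), DGHVIdx.deg i' ≠ DGHVIdx.deg i + j →
      bas.repr (φ (bas i)) i' = 0 := by
    intro i i' h
    have h1 : bas i ∈ Submodule.span ℂ (⇑bas '' {i0 | DGHVIdx.deg i0 = DGHVIdx.deg i}) :=
      Submodule.subset_span ⟨i, rfl, rfl⟩
    have h2 := hdeg _ _ h1
    rw [Module.Basis.mem_span_image] at h2
    by_contra hne
    exact h (h2 (Finsupp.mem_support_iff.mpr hne))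
  -- expansion lemma
  have hexp : ∀ i : DGHVIdx G, φ (bas i) =
      bas.repr (φ (bas i)) (.L (i.deg + j)) • bas (.L (i.deg + j)) +
      bas.repr (φ (bas i)) (.I (i.deg + j)) • bas (.I (i.deg + j)) +
      bas.repr (φ (bas i)) .CL • bas .CL := by
    intro i
    apply bas.repr.injective
    ext i'
    simp only [map_add, map_smul, Module.Basis.repr_self, Finsupp.add_apply, Finsupp.smul_apply,
      Finsupp.single_apply, smul_eq_mul]
    rcases i' with m | m | _
    · by_cases hm : m = i.deg + j
      · subst hm; simp
      · rw [hsupp i (.L m) (by simpa [DGHVIdx.deg] using hm)]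
        simp [Ne.symm hm]
    · by_cases hm : m = i.deg + j
      · subst hm; simp
      · rw [hsupp i (.I m) (by simpa [DGHVIdx.deg] using hm)]
        simp [Ne.symm hm]
    · simp
  -- auxiliary bracket lemmas
  have hXCL : ∀ z : Lg, ⁅z, bas DGHVIdx.CL⁆ = 0 := by
    intro z; rw [← lie_skew, hCL, neg_zero]
  have hIL : ∀ a b : G, ⁅bas (DGHVIdx.I a), bas (DGHVIdx.L b)⁆ =
      (lam * (b : ℂ) - (a : ℂ)) • bas (DGHVIdx.I (b + a)) := by
    intro a b
    rw [← lie_skew, hLI, ← neg_smul]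
    ring_nf
  -- coefficient functions
  have hLex : ∀ k : G, ∃ A B C : ℂ, φ (bas (DGHVIdx.L k)) =
      A • bas (DGHVIdx.L (k + j)) + B • bas (DGHVIdx.I (k + j)) + C • bas DGHVIdx.CL :=
    fun k => ⟨_, _, _, by simpa [DGHVIdx.deg] using hexp (DGHVIdx.L k)⟩
  choose a b c hφL using hLex
  have hIex : ∀ k : G, ∃ A B C : ℂ, φ (bas (DGHVIdx.I k)) =
      A • bas (DGHVIdx.L (k + j)) + B • bas (DGHVIdx.I (k + j)) + C • bas DGHVIdx.CL :=
    fun k => ⟨_, _, _, by simpa [DGHVIdx.deg] using hexp (DGHVIdx.I k)⟩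
  choose p q r hφI using hIex
  -- φ CL = 0
  have hφC0 : φ (bas DGHVIdx.CL) = 0 := by
    have hW : bas.repr (φ (bas DGHVIdx.CL)) DGHVIdx.CL = 0 := by
      apply hsupp
      simpa [DGHVIdx.deg] using fun h => hj (by simpa using h.symm)
    have hC := hexp DGHVIdx.CL
    rw [hW, zero_smul, add_zero] at hC
    simp only [DGHVIdx.deg, zero_add] at hC
    set U := bas.repr (φ (bas DGHVIdx.CL)) (DGHVIdx.L j) with hU
    set V := bas.repr (φ (bas DGHVIdx.CL)) (DGHVIdx.I j) with hV
    -- bracket with I 0 kills U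
    have h1 := hφ (bas DGHVIdx.CL) (bas (DGHVIdx.I 0))
    rw [hCL, map_zero, hCL, hC] at h1
    simp only [add_lie, smul_lie, hLI, hII, smul_zero, add_zero, smul_smul] at h1
    have h1' := congrArg (fun z => bas.repr z (DGHVIdx.I (j + 0))) h1.symm
    simp only [map_add, map_smul, Module.Basis.repr_self, Finsupp.smul_apply, Finsupp.add_apply,
      Finsupp.single_apply, smul_eq_mul, map_zero, Finsupp.coe_zero, Pi.zero_apply,
      add_zero, ZeroMemClass.coe_zero, if_pos, mul_one] at h1'
    have hU0 : U = 0 := by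
      have h2 : U * (lam * (j:ℂ)) = 0 := by linear_combination (-2 : ℂ) * h1'
      rcases mul_eq_zero.mp h2 with h | h
      · exact h
      · exact absurd h (mul_ne_zero hlam0 hjc)
    -- bracket with L 0 kills V
    have h3 := hφ (bas DGHVIdx.CL) (bas (DGHVIdx.L 0))
    rw [hCL, map_zero, hCL, hC, hU0, zero_smul, zero_add] at h3
    simp only [add_lie, smul_lie, hIL, smul_smul, add_zero, zero_add] at h3
    have h3' := congrArg (fun z => bas.repr z (DGHVIdx.I (0 + j))) h3.symm
    simp only [map_add, map_smul, Module.Basis.repr_self, Finsupp.smul_apply, Finsupp.add_apply,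
      Finsupp.single_apply, smul_eq_mul, map_zero, Finsupp.coe_zero, Pi.zero_apply,
      zero_add, ZeroMemClass.coe_zero, if_pos, mul_one] at h3'
    have hV0 : V = 0 := by
      have h4 : V * (j:ℂ) = 0 := by linear_combination (-2 : ℂ) * h3'
      rcases mul_eq_zero.mp h4 with h | h
      · exact h
      · exact absurd h hjc
    rw [hU0, hV0, zero_smul, zero_smul, zero_add] at hC
    exact hC
  -- main equations
  have E1 : ∀ x y : G, 2 * ((y:ℂ) - lam * x) * p (x+y) = p y * ((y:ℂ) + j - x) := by
    intro x y
    have h := hφ (bas (DGHVIdx.L x)) (bas (DGHVIdx.I y))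
    rw [hLI] at h
    rw [map_smul, hφI (x+y), hφL x, hφI y] at h
    simp only [add_lie, smul_lie, lie_add, lie_smul, hLL, hLI, hII, hIL, hCL, hXCL,
      smul_zero, add_zero, zero_add, smul_add, smul_smul] at h
    have h' := congrArg (fun z => bas.repr z (DGHVIdx.L (x + y + j))) h
    simp only [map_add, map_smul, Module.Basis.repr_self, Finsupp.add_apply, Finsupp.smul_apply,
      Finsupp.single_apply, smul_eq_mul, mul_ite, mul_one, mul_zero,
      add_assoc, add_comm, add_left_comm, DGHVIdx.L.injEq, DGHVIdx.I.injEq,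
      reduceCtorEq, if_true, if_false, ite_true, ite_false, eq_self_iff_true] at h'
    push_cast at h'
    linear_combination 2 * h'
  have E2 : ∀ x y : G, 2 * ((y:ℂ) - lam * x) * q (x+y) =
      a x * ((y:ℂ) - lam * x - lam * j) + q y * ((y:ℂ) + j - lam * x) := by
    intro x y
    have h := hφ (bas (DGHVIdx.L x)) (bas (DGHVIdx.I y))
    rw [hLI] at h
    rw [map_smul, hφI (x+y), hφL x, hφI y] at h
    simp only [add_lie, smul_lie, lie_add, lie_smul, hLL, hLI, hII, hIL, hCL, hXCL,
      smul_zero, add_zero, zero_add, smul_add, smul_smul] at h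
    have h' := congrArg (fun z => bas.repr z (DGHVIdx.I (x + y + j))) h
    simp only [map_add, map_smul, Module.Basis.repr_self, Finsupp.add_apply, Finsupp.smul_apply,
      Finsupp.single_apply, smul_eq_mul, mul_ite, mul_one, mul_zero,
      add_assoc, add_comm, add_left_comm, DGHVIdx.L.injEq, DGHVIdx.I.injEq,
      reduceCtorEq, if_true, if_false, ite_true, ite_false, eq_self_iff_true] at h'
    push_cast at h'
    linear_combination 2 * h'
  have E3 : ∀ x y : G, 2 * ((y:ℂ) - x) * a (x+y) =
      a x * ((y:ℂ) - x - j) + a y * ((y:ℂ) + j - x) := by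
    intro x y
    have h := hφ (bas (DGHVIdx.L x)) (bas (DGHVIdx.L y))
    rw [hLL] at h
    rw [map_add, map_smul, map_smul, hφL (x+y), hφC0, smul_zero, add_zero] at h
    rw [hφL x, hφL y] at h
    simp only [add_lie, smul_lie, lie_add, lie_smul, hLL, hLI, hII, hIL, hCL, hXCL,
      smul_zero, add_zero, zero_add, smul_add, smul_smul] at h
    have h' := congrArg (fun z => bas.repr z (DGHVIdx.L (x + y + j))) h
    simp only [map_add, map_smul, Module.Basis.repr_self, Finsupp.add_apply, Finsupp.smul_apply,
      Finsupp.single_apply, smul_eq_mul, mul_ite, mul_one, mul_zero,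
      add_assoc, add_comm, add_left_comm, DGHVIdx.L.injEq, DGHVIdx.I.injEq,
      reduceCtorEq, if_true, if_false, ite_true, ite_false, eq_self_iff_true] at h'
    push_cast at h'
    linear_combination 2 * h'
  have E4 : ∀ x y : G, 2 * ((y:ℂ) - x) * b (x+y) =
      -(b x * ((x:ℂ) + j - lam * y)) + b y * ((y:ℂ) + j - lam * x) := by
    intro x y
    have h := hφ (bas (DGHVIdx.L x)) (bas (DGHVIdx.L y))
    rw [hLL] at h
    rw [map_add, map_smul, map_smul, hφL (x+y), hφC0, smul_zero, add_zero] at h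
    rw [hφL x, hφL y] at h
    simp only [add_lie, smul_lie, lie_add, lie_smul, hLL, hLI, hII, hIL, hCL, hXCL,
      smul_zero, add_zero, zero_add, smul_add, smul_smul] at h
    have h' := congrArg (fun z => bas.repr z (DGHVIdx.I (x + y + j))) h
    simp only [map_add, map_smul, Module.Basis.repr_self, Finsupp.add_apply, Finsupp.smul_apply,
      Finsupp.single_apply, smul_eq_mul, mul_ite, mul_one, mul_zero,
      add_assoc, add_comm, add_left_comm, DGHVIdx.L.injEq, DGHVIdx.I.injEq,
      reduceCtorEq, if_true, if_false, ite_true, ite_false, eq_self_iff_true] at h'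
    push_cast at h'
    linear_combination 2 * h'
  -- pick lemma
  have pick : ∀ s1 s2 : ℂ, ∃ x : G, (x:ℂ) ≠ 0 ∧ (x:ℂ) ≠ s1 ∧ (x:ℂ) ≠ s2 := by
    obtain ⟨t, ht⟩ := exists_ne (0 : G)
    have htc : (t:ℂ) ≠ 0 := fun h => ht (by simpa using h)
    intro s1 s2
    by_cases e1 : (t:ℂ) = s1
    · by_cases e2 : (t:ℂ) + (t:ℂ) = s2
      · refine ⟨t+t+t, ?_, ?_, ?_⟩ <;> push_cast
        · intro h; exact htc (by linear_combination h/3)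
        · rw [← e1]; intro h; exact htc (by linear_combination h/2)
        · rw [← e2]; intro h; exact htc (by linear_combination h)
      · refine ⟨t+t, ?_, ?_, ?_⟩ <;> push_cast
        · intro h; exact htc (by linear_combination h/2)
        · rw [← e1]; intro h; exact htc (by linear_combination h)
        · exact e2
    · by_cases e1' : (t:ℂ) = s2
      · by_cases e2 : (t:ℂ) + (t:ℂ) = s1
        · refine ⟨t+t+t, ?_, ?_, ?_⟩ <;> push_cast
          · intro h; exact htc (by linear_combination h/3)
          · rw [← e2]; intro h; exact htc (by linear_combination h)
          · rw [← e1']; intro h; exact htc (by linear_combination h/2)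
        · refine ⟨t+t, ?_, ?_, ?_⟩ <;> push_cast
          · intro h; exact htc (by linear_combination h/2)
          · exact e2
          · rw [← e1']; intro h; exact htc (by linear_combination h)
      · exact ⟨t, htc, e1, e1'⟩
  -- p ≡ 0
  have hp1 : ∀ y : G, p y * ((y:ℂ) - j) = 0 := by
    intro y
    have h := E1 0 y
    rw [zero_add] at h
    push_cast at h
    linear_combination h
  have hp : ∀ k : G, p k = 0 := by
    intro k
    by_cases hk : k = j
    · have h2j : p (j + j) = 0 := by
        rcases mul_eq_zero.mp (hp1 (j+j)) with h0 | h0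
        · exact h0
        · exact absurd (by push_cast at h0; linear_combination h0 : (j:ℂ) = 0) hjc
      have h := E1 j j
      rw [h2j, mul_zero] at h
      have hpj : p j * (j:ℂ) = 0 := by linear_combination -h
      rw [hk]
      rcases mul_eq_zero.mp hpj with h0 | h0
      · exact h0
      · exact absurd h0 hjc
    · rcases mul_eq_zero.mp (hp1 k) with h0 | h0
      · exact h0
      · exact absurd (Subtype.coe_injective (sub_eq_zero.mp h0)) hk
  -- a and q
  have ha1 : ∀ x : G, a x * ((j:ℂ) - x) = a 0 * ((j:ℂ) - x) := by
    intro x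
    have h := E3 x 0
    rw [add_zero] at h
    push_cast at h
    linear_combination h
  have hq1 : ∀ y : G, q y * ((y:ℂ) - j) = a 0 * ((y:ℂ) - lam * j) := by
    intro y
    have h := E2 0 y
    rw [zero_add] at h
    push_cast at h
    linear_combination h
  have hq0 : q 0 = lam * a 0 := by
    have h := hq1 0
    push_cast at h
    have h2 : (q 0 - lam * a 0) * (j:ℂ) = 0 := by linear_combination -h
    rcases mul_eq_zero.mp h2 with h0 | h0
    · linear_combination h0
    · exact absurd h0 hjc
  have hE2y0 : ∀ x : G, -(2 * lam * (x:ℂ)) * q x =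
      -(lam * a x * ((x:ℂ) + j)) + lam * a 0 * ((j:ℂ) - lam * x) := by
    intro x
    have h := E2 x 0
    rw [add_zero] at h
    push_cast at h
    linear_combination h + ((j:ℂ) - lam * x) * hq0
  have ha0 : a 0 = 0 := by
    obtain ⟨t, ht0, htj, -⟩ := pick (-(j:ℂ)) 37
    have hkey : a 0 * (lam * (lam - 1) * ((t:ℂ)^2 + (j:ℂ) * t)) = 0 := by
      linear_combination ((t:ℂ) - j) * hE2y0 t + (2 * lam * (t:ℂ)) * hq1 t +
        lam * ((t:ℂ) + j) * ha1 t
    rcases mul_eq_zero.mp hkey with h0 | h0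
    · exact h0
    · exfalso
      have ht2 : (t:ℂ)^2 + (j:ℂ) * t = (t:ℂ) * ((t:ℂ) + j) := by ring
      rw [ht2] at h0
      rcases mul_eq_zero.mp h0 with h1 | h1
      · rcases mul_eq_zero.mp h1 with h2 | h2
        · exact hlam0 h2
        · exact hlam1 (by linear_combination h2)
      · rcases mul_eq_zero.mp h1 with h2 | h2
        · exact ht0 h2
        · exact htj (by linear_combination h2)
  have ha : ∀ k : G, a k = 0 := by
    intro k
    by_cases hk : k = j
    · have hamj : a (-j) = 0 := by
        have h := ha1 (-j)
        rw [ha0, zero_mul] at h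
        push_cast at h
        rcases mul_eq_zero.mp h with h0 | h0
        · exact h0
        · exact absurd (by linear_combination h0 / 2 : (j:ℂ) = 0) hjc
      have h := E3 j (-j)
      rw [add_neg_cancel, ha0, hamj, mul_zero, zero_mul, add_zero] at h
      push_cast at h
      have h2 : a j * (j:ℂ) = 0 := by linear_combination h / 3
      rw [hk]
      rcases mul_eq_zero.mp h2 with h0 | h0
      · exact h0
      · exact absurd h0 hjc
    · have h := ha1 k
      rw [ha0, zero_mul] at h
      rcases mul_eq_zero.mp h with h0 | h0
      · exact h0
      · exact absurd (Subtype.coe_injective (by linear_combination -h0 : (k:ℂ) = j)) hk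
  have hq : ∀ k : G, q k = 0 := by
    intro k
    by_cases hk : k = j
    · have h := hE2y0 j
      rw [ha j, ha0] at h
      have h2 : q j * ((2:ℂ) * lam * j) = 0 := by linear_combination -h
      rw [hk]
      rcases mul_eq_zero.mp h2 with h0 | h0
      · exact h0
      · exfalso
        rcases mul_eq_zero.mp h0 with h1 | h1
        · rcases mul_eq_zero.mp h1 with h2' | h2'
          · exact two_ne_zero h2'
          · exact hlam0 h2'
        · exact hjc h1
    · have h := hq1 k
      rw [ha0, zero_mul] at h
      rcases mul_eq_zero.mp h with h0 | h0
      · exact h0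
      · exact absurd (Subtype.coe_injective (by linear_combination h0 : (k:ℂ) = j)) hk
  -- b ≡ 0
  have hb1 : ∀ x : G, b x * ((j:ℂ) - x) = b 0 * ((j:ℂ) - lam * x) := by
    intro x
    have h := E4 x 0
    rw [add_zero] at h
    push_cast at h
    linear_combination h
  have hb1m : ∀ x : G, b (-x) * ((j:ℂ) + x) = b 0 * ((j:ℂ) + lam * x) := by
    intro x
    have h := hb1 (-x)
    push_cast at h
    linear_combination h
  have hb4 : ∀ x : G, -(4 * (x:ℂ)) * b 0 =
      -(b x * ((x:ℂ) + j + lam * x)) + b (-x) * ((j:ℂ) - x - lam * x) := by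
    intro x
    have h := E4 x (-x)
    rw [add_neg_cancel] at h
    push_cast at h
    linear_combination h
  have hb0 : b 0 = 0 := by
    obtain ⟨t, ht⟩ := exists_ne (0 : G)
    have htc : (t:ℂ) ≠ 0 := fun h => ht (by simpa using h)
    have hkey : b 0 * (-2 * (lam - 1) * (lam + 2) * (t:ℂ)^3) = 0 := by
      linear_combination ((j:ℂ) + t) * ((j:ℂ) - t) * hb4 t +
        (-((j:ℂ) + t) * ((t:ℂ) + j + lam * t)) * hb1 t +
        (((j:ℂ) - t) * ((j:ℂ) - t - lam * t)) * hb1m t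
    rcases mul_eq_zero.mp hkey with h0 | h0
    · exact h0
    · exfalso
      rcases mul_eq_zero.mp h0 with h1 | h1
      · rcases mul_eq_zero.mp h1 with h2 | h2
        · rcases mul_eq_zero.mp h2 with h3 | h3
          · norm_num at h3
          · exact hlam1 (by linear_combination h3)
        · exact hlam2 (by linear_combination h2)
      · exact htc (pow_eq_zero_iff (by norm_num)|>.mp h1)
  have hb : ∀ k : G, b k = 0 := by
    have hbne : ∀ x : G, x ≠ j → b x = 0 := by
      intro x hx
      have h := hb1 x
      rw [hb0, zero_mul] at h
      rcases mul_eq_zero.mp h with h0 | h0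
      · exact h0
      · exact absurd (Subtype.coe_injective (by linear_combination -h0 : (x:ℂ) = j)) hx
    intro k
    by_cases hk : k = j
    · obtain ⟨s, hs0, hsj, hs2⟩ := pick (j:ℂ) (2 * (j:ℂ) / lam)
      have hssj : s + j ≠ j := fun h => hs0 (by simpa using congrArg (fun z : G => (z:ℂ) - j) h)
      have h := E4 s j
      rw [hbne (s+j) hssj, hbne s (fun h' => hsj (congrArg _ h')), mul_zero, zero_mul,
        neg_zero, zero_add] at h
      rw [hk]
      rcases mul_eq_zero.mp h.symm with h0 | h0
      · exact h0
      · exfalso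
        apply hs2
        field_simp
        linear_combination -h0
    · exact hbne k hk
  -- finish
  have hc0 : c 0 = 0 := by
    have h := hsupp (DGHVIdx.L 0) DGHVIdx.CL (by
      simp only [DGHVIdx.deg, zero_add]
      exact Ne.symm hj)
    rw [hφL 0] at h
    simpa [Finsupp.single_apply] using h
  have hr0 : r 0 = 0 := by
    have h := hsupp (DGHVIdx.I 0) DGHVIdx.CL (by
      simp only [DGHVIdx.deg, zero_add]
      exact Ne.symm hj)
    rw [hφI 0] at h
    simpa [Finsupp.single_apply] using h
  have hφL0 : φ (bas (DGHVIdx.L 0)) = 0 := by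
    rw [hφL 0, ha 0, hb 0, hc0]; simp
  have hφI0 : φ (bas (DGHVIdx.I 0)) = 0 := by
    rw [hφI 0, hp 0, hq 0, hr0]; simp
  have hck : ∀ k : G, c k = 0 := by
    intro k
    by_cases hk : k = 0
    · rw [hk]; exact hc0
    · have h := hφ (bas (DGHVIdx.L 0)) (bas (DGHVIdx.L k))
      rw [hLL] at h
      simp only [zero_add, ZeroMemClass.coe_zero, sub_zero, hk, if_neg, ite_false] at h
      rw [zero_smul, add_zero, map_smul, hφL0, zero_lie, hφL k, ha k, hb k] at h
      simp only [zero_smul, zero_add, lie_add, lie_smul, hXCL, smul_zero, add_zero,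
        smul_smul] at h
      have h' := congrArg (fun z => bas.repr z DGHVIdx.CL) h
      simp only [map_smul, map_zero, Module.Basis.repr_self, Finsupp.smul_apply,
        Finsupp.single_apply, smul_eq_mul, mul_one, if_pos, Finsupp.coe_zero,
        Pi.zero_apply] at h'
      have hkc : (k:ℂ) ≠ 0 := fun hh => hk (by simpa using hh)
      rcases mul_eq_zero.mp h' with h0 | h0
      · exact absurd h0 hkc
      · exact h0
  have hrk : ∀ k : G, r k = 0 := by
    intro k
    by_cases hk : k = 0
    · rw [hk]; exact hr0
    · have h := hφ (bas (DGHVIdx.L 0)) (bas (DGHVIdx.I k))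
      rw [hLI] at h
      simp only [zero_add, ZeroMemClass.coe_zero, mul_zero, sub_zero] at h
      rw [map_smul, hφL0, zero_lie, hφI k, hp k, hq k] at h
      simp only [zero_smul, zero_add, lie_add, lie_smul, hXCL, smul_zero, add_zero,
        smul_smul] at h
      have h' := congrArg (fun z => bas.repr z DGHVIdx.CL) h
      simp only [map_smul, map_zero, Module.Basis.repr_self, Finsupp.smul_apply,
        Finsupp.single_apply, smul_eq_mul, mul_one, if_pos, Finsupp.coe_zero,
        Pi.zero_apply] at h'
      have hkc : (k:ℂ) ≠ 0 := fun hh => hk (by simpa using hh)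
      rcases mul_eq_zero.mp h' with h0 | h0
      · exact absurd h0 hkc
      · exact h0
  refine bas.ext fun i => ?_
  rcases i with k | k | _
  · rw [hφL k, ha k, hb k, hck k]; simp
  · rw [hφI k, hp k, hq k, hrk k]; simp
  · simpa using hφC0
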